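/- Let 0<q<1, let a₁,…,a_r and b₁,…,b_s be real numbers in [0,1), and let k be a natural number. Then | (∏_{j=1}^s (b_j q^k; q)_∞) · (∏_{j=1}^r 1/(a_j q^k; q)_∞) − 1 | ≤ (2/(1−q))^{r+s} · ( ∏_{j=1}^s (−b_j q²; q)_∞ ) · q^k / ( ∏_{j=1}^r (a_j; q)_∞ ). -/

import Mathlib

open Real Finset Filter

/-- A positive function whose logs are absolutely summable has a product. -/
lemma hasProd_of_summable_abs_log {f : ℕ → ℝ} (hpos : ∀ j, 0 < f j)
    (hsum : Summable fun j => |Real.log (f j)|) :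
    HasProd f (Real.exp (∑' j, Real.log (f j))) := by
  have h := (hsum.of_abs).hasSum.rexp
  convert h using 1
  funext j
  simp [Function.comp, Real.exp_log (hpos j)]

lemma multipliable_of_summable_abs_log {f : ℕ → ℝ} (hpos : ∀ j, 0 < f j)
    (hsum : Summable fun j => |Real.log (f j)|) : Multipliable f :=
  ⟨_, hasProd_of_summable_abs_log hpos hsum⟩

lemma tprod_pos_of_summable_abs_log {f : ℕ → ℝ} (hpos : ∀ j, 0 < f j)
    (hsum : Summable fun j => |Real.log (f j)|) : 0 < ∏' j, f j := by
  rw [(hasProd_of_summable_abs_log hpos hsum).tprod_eq]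
  exact Real.exp_pos _

lemma summable_abs_log_one_sub {x : ℕ → ℝ} {c : ℝ} (hc : c < 1) (hx : ∀ j, 0 ≤ x j)
    (hxc : ∀ j, x j ≤ c) (hsum : Summable x) :
    Summable (fun j => |Real.log (1 - x j)|) := by
  have hpos : ∀ j, 0 < 1 - x j := fun j => by linarith [hxc j]
  have hc0 : 0 < 1 - c := by linarith
  refine Summable.of_nonneg_of_le (fun j => abs_nonneg _) (fun j => ?_)
    (hsum.mul_right (1 - c)⁻¹)
  have h1 : Real.log (1 - x j) ≤ 0 := Real.log_nonpos (by linarith [hpos j]) (by linarith [hx j])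
  rw [abs_of_nonpos h1]
  have h2 : Real.log ((1 - x j)⁻¹) ≤ (1 - x j)⁻¹ - 1 :=
    Real.log_le_sub_one_of_pos (inv_pos.mpr (hpos j))
  rw [Real.log_inv] at h2
  have h3 : (1 - x j)⁻¹ - 1 = x j / (1 - x j) := by
    rw [inv_eq_one_div, div_sub' (ne_of_gt (hpos j))]
    ring_nf
  have h4 : x j / (1 - x j) ≤ x j * (1 - c)⁻¹ := by
    rw [div_eq_mul_inv]
    gcongr
    · exact hx j
    · linarith [hxc j]
  linarith

lemma multipliable_one_sub {x : ℕ → ℝ} {c : ℝ} (hc : c < 1) (hx : ∀ j, 0 ≤ x j)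
    (hxc : ∀ j, x j ≤ c) (hsum : Summable x) : Multipliable (fun j => 1 - x j) :=
  multipliable_of_summable_abs_log (fun j => by linarith [hxc j])
    (summable_abs_log_one_sub hc hx hxc hsum)

lemma tprod_one_sub_pos {x : ℕ → ℝ} {c : ℝ} (hc : c < 1) (hx : ∀ j, 0 ≤ x j)
    (hxc : ∀ j, x j ≤ c) (hsum : Summable x) : 0 < ∏' j, (1 - x j) :=
  tprod_pos_of_summable_abs_log (fun j => by linarith [hxc j])
    (summable_abs_log_one_sub hc hx hxc hsum)

lemma multipliable_one_add {y : ℕ → ℝ} (hy : ∀ j, 0 ≤ y j) (hsum : Summable y) :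
    Multipliable (fun j => 1 + y j) := by
  have hpos : ∀ j, 0 < 1 + y j := fun j => by linarith [hy j]
  refine multipliable_of_summable_abs_log hpos ?_
  refine Summable.of_nonneg_of_le (fun j => abs_nonneg _) (fun j => ?_) hsum
  rw [abs_of_nonneg (Real.log_nonneg (by linarith [hy j]))]
  linarith [Real.log_le_sub_one_of_pos (hpos j)]

/-- The infinite q-Pochhammer symbol `(a; q)_∞ = ∏_{j=0}^∞ (1 - a q^j)`. -/
noncomputable def qPochInf (a q : ℝ) : ℝ := ∏' j : ℕ, (1 - a * q ^ j)

section helpers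
variable {f g : ℕ → ℝ}

lemma tprod_le_of_forall (hf : Multipliable f) {C : ℝ}
    (h : ∀ t : Finset ℕ, ∏ i ∈ t, f i ≤ C) : ∏' i, f i ≤ C :=
  le_of_tendsto hf.hasProd (Filter.Eventually.of_forall h)

lemma le_tprod_of_forall (hf : Multipliable f) {C : ℝ}
    (h : ∀ t : Finset ℕ, C ≤ ∏ i ∈ t, f i) : C ≤ ∏' i, f i :=
  ge_of_tendsto hf.hasProd (Filter.Eventually.of_forall h)

lemma tprod_le_tprod_of_forall (hf : Multipliable f) (hg : Multipliable g)
    (h : ∀ t : Finset ℕ, ∏ i ∈ t, f i ≤ ∏ i ∈ t, g i) : ∏' i, f i ≤ ∏' i, g i :=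
  le_of_tendsto_of_tendsto' hf.hasProd hg.hasProd h

end helpers

section qpoch
variable {q : ℝ}

lemma summable_aq (hq0 : 0 < q) (hq1 : q < 1) (a : ℝ) :
    Summable (fun j : ℕ => a * q ^ j) :=
  (summable_geometric_of_lt_one hq0.le hq1).mul_left a

lemma qPoch_multipliable (hq0 : 0 < q) (hq1 : q < 1) {a : ℝ} (ha0 : 0 ≤ a) (ha1 : a < 1) :
    Multipliable (fun j : ℕ => 1 - a * q ^ j) := by
  refine multipliable_one_sub ha1 (fun j => by positivity) (fun j => ?_)
    (summable_aq hq0 hq1 a)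
  calc a * q ^ j ≤ a * 1 := by
        gcongr
        exact pow_le_one₀ hq0.le hq1.le
    _ = a := mul_one a

lemma qPoch_le_one (hq0 : 0 < q) (hq1 : q < 1) {a : ℝ} (ha0 : 0 ≤ a) (ha1 : a < 1) :
    qPochInf a q ≤ 1 := by
  refine tprod_le_of_forall (qPoch_multipliable hq0 hq1 ha0 ha1) (fun t => ?_)
  refine Finset.prod_le_one (fun j _ => ?_) (fun j _ => ?_)
  · have : a * q ^ j ≤ a := by
      calc a * q ^ j ≤ a * 1 := by gcongr; exact pow_le_one₀ hq0.le hq1.le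
        _ = a := mul_one a
    linarith
  · nlinarith [pow_pos hq0 j, pow_nonneg hq0.le j, mul_nonneg ha0 (pow_nonneg hq0.le j)]

lemma qPoch_ge (hq0 : 0 < q) (hq1 : q < 1) {a : ℝ} (ha0 : 0 ≤ a) (ha1 : a < 1) :
    1 - a / (1 - q) ≤ qPochInf a q := by
  refine le_tprod_of_forall (qPoch_multipliable hq0 hq1 ha0 ha1) (fun t => ?_)
  have h1 : 1 - ∑ j ∈ t, a * q ^ j ≤ ∏ j ∈ t, (1 - a * q ^ j) := by
    classical
    induction t using Finset.induction_on with
    | empty => simp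
    | @insert i t' hj ih =>
      rw [Finset.prod_insert hj, Finset.sum_insert hj]
      have hfac : 0 ≤ 1 - a * q ^ i := by
        have : a * q ^ i ≤ a := by
          calc a * q ^ i ≤ a * 1 := by gcongr; exact pow_le_one₀ hq0.le hq1.le
            _ = a := mul_one a
        linarith
      have hsum0 : 0 ≤ ∑ j ∈ t', a * q ^ j :=
        Finset.sum_nonneg (fun j _ => by positivity)
      nlinarith [mul_nonneg ha0 (pow_nonneg hq0.le i)]
  have h2 : ∑ j ∈ t, a * q ^ j ≤ a / (1 - q) := by
    have := Summable.sum_le_tsum t (fun j _ => by positivity : ∀ j ∉ t, (0:ℝ) ≤ a * q ^ j)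
      (summable_aq hq0 hq1 a)
    have htsum : ∑' j : ℕ, a * q ^ j = a / (1 - q) := by
      rw [tsum_mul_left, tsum_geometric_of_lt_one hq0.le hq1, div_eq_mul_inv]
    linarith [this, htsum ▸ this]
  linarith

lemma qPoch_mono (hq0 : 0 < q) (hq1 : q < 1) {a : ℝ} (ha0 : 0 ≤ a) (ha1 : a < 1) (k : ℕ) :
    qPochInf a q ≤ qPochInf (a * q ^ k) q := by
  have hak0 : 0 ≤ a * q ^ k := by positivity
  have hak1 : a * q ^ k < 1 := by
    calc a * q ^ k ≤ a * 1 := by gcongr; exact pow_le_one₀ hq0.le hq1.le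
      _ = a := mul_one a
      _ < 1 := ha1
  refine tprod_le_tprod_of_forall (qPoch_multipliable hq0 hq1 ha0 ha1)
    (qPoch_multipliable hq0 hq1 hak0 hak1) (fun t => ?_)
  refine Finset.prod_le_prod (fun j _ => ?_) (fun j _ => ?_)
  · have : a * q ^ j ≤ a := by
      calc a * q ^ j ≤ a * 1 := by gcongr; exact pow_le_one₀ hq0.le hq1.le
        _ = a := mul_one a
    linarith
  · have : a * q ^ k * q ^ j ≤ a * q ^ j := by
      rw [mul_comm (a * q ^ k), ← mul_assoc]
      calc q ^ j * a * q ^ k ≤ q ^ j * a * 1 := by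
            have : (0:ℝ) ≤ q ^ j * a := by positivity
            gcongr
            exact pow_le_one₀ hq0.le hq1.le
        _ = a * q ^ j := by ring
    linarith

lemma qPoch_pos (hq0 : 0 < q) (hq1 : q < 1) {a : ℝ} (ha0 : 0 ≤ a) (ha1 : a < 1) :
    0 < qPochInf a q := by
  refine tprod_one_sub_pos ha1 (fun j => by positivity) (fun j => ?_)
    (summable_aq hq0 hq1 a)
  calc a * q ^ j ≤ a * 1 := by gcongr; exact pow_le_one₀ hq0.le hq1.le
    _ = a := mul_one a

lemma qPoch_neg_ge_one (hq0 : 0 < q) (hq1 : q < 1) {b : ℝ} (hb0 : 0 ≤ b) :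
    1 ≤ qPochInf (-b) q := by
  have heq : qPochInf (-b) q = ∏' j : ℕ, (1 + b * q ^ j) := by
    unfold qPochInf
    congr 1
    funext j
    ring
  rw [heq]
  refine le_tprod_of_forall (multipliable_one_add (fun j => by positivity)
    (summable_aq hq0 hq1 b)) (fun t => ?_)
  calc (1:ℝ) = ∏ _j ∈ t, (1:ℝ) := by simp
    _ ≤ ∏ j ∈ t, (1 + b * q ^ j) := by
        refine Finset.prod_le_prod (fun j _ => zero_le_one) (fun j _ => ?_)
        nlinarith [mul_nonneg hb0 (pow_nonneg hq0.le j)]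

end qpoch

lemma abs_prod_sub_one_le {ι : Type*} (s : Finset ι) (x c : ι → ℝ) (hc : ∀ i, 0 ≤ c i)
    (h : ∀ i, |x i - 1| ≤ c i) :
    |∏ i ∈ s, x i - 1| ≤ ∏ i ∈ s, (1 + c i) - 1 := by
  classical
  induction s using Finset.induction_on with
  | empty => simp
  | @insert i t hi ih =>
    rw [Finset.prod_insert hi, Finset.prod_insert hi]
    have hxabs : |x i| ≤ 1 + c i := by
      have : |x i| ≤ |x i - 1| + 1 := by
        calc |x i| = |(x i - 1) + 1| := by ring_nf
          _ ≤ |x i - 1| + |(1:ℝ)| := abs_add_le _ _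
          _ = |x i - 1| + 1 := by rw [abs_one]
      linarith [h i]
    have e1 : |x i * ∏ j ∈ t, x j - 1| ≤ |x i| * |∏ j ∈ t, x j - 1| + |x i - 1| := by
      have heq : x i * ∏ j ∈ t, x j - 1 = x i * (∏ j ∈ t, x j - 1) + (x i - 1) := by ring
      rw [heq]
      calc |x i * (∏ j ∈ t, x j - 1) + (x i - 1)|
          ≤ |x i * (∏ j ∈ t, x j - 1)| + |x i - 1| := abs_add_le _ _
        _ = |x i| * |∏ j ∈ t, x j - 1| + |x i - 1| := by rw [abs_mul]
    nlinarith [abs_nonneg (∏ j ∈ t, x j - 1), abs_nonneg (x i), hc i, h i]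

lemma prod_one_add_mul_le {ι : Type*} (s : Finset ι) (c : ι → ℝ) (t : ℝ) (ht0 : 0 ≤ t)
    (ht1 : t ≤ 1) (hc : ∀ i, 0 ≤ c i) :
    ∏ i ∈ s, (1 + t * c i) - 1 ≤ t * (∏ i ∈ s, (1 + c i) - 1) := by
  classical
  induction s using Finset.induction_on with
  | empty => simp
  | @insert i u hi ih =>
    rw [Finset.prod_insert hi, Finset.prod_insert hi]
    have hPQ : ∏ j ∈ u, (1 + t * c j) ≤ ∏ j ∈ u, (1 + c j) := by
      refine Finset.prod_le_prod (fun j _ => by nlinarith [hc j]) (fun j _ => by nlinarith [hc j])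
    have hP0 : (0:ℝ) ≤ ∏ j ∈ u, (1 + t * c j) :=
      Finset.prod_nonneg (fun j _ => by nlinarith [hc j])
    nlinarith [hc i, mul_nonneg (mul_nonneg ht0 (hc i)) (sub_nonneg.2 hPQ)]

theorem stmt11 (q : ℝ) (hq0 : 0 < q) (hq1 : q < 1) (r s : ℕ)
    (a : Fin r → ℝ) (b : Fin s → ℝ)
    (ha : ∀ j, a j ∈ Set.Ico (0 : ℝ) 1) (hb : ∀ j, b j ∈ Set.Ico (0 : ℝ) 1) (k : ℕ) :
    |(∏ j, qPochInf (b j * q ^ k) q) * (∏ j, (qPochInf (a j * q ^ k) q)⁻¹) - 1|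
      ≤ (2 / (1 - q)) ^ (r + s) * (∏ j, qPochInf (-(b j * q ^ 2)) q) * q ^ k
          / ∏ j, qPochInf (a j) q := by
  have h1q : (0:ℝ) < 1 - q := by linarith
  have hqk0 : (0:ℝ) < q ^ k := pow_pos hq0 k
  have hqk1 : q ^ k ≤ 1 := pow_le_one₀ hq0.le hq1.le
  have hA : ∀ j : Fin r, 0 < qPochInf (a j) q := fun j =>
    qPoch_pos hq0 hq1 (ha j).1 (ha j).2
  have hAle1 : ∀ j : Fin r, qPochInf (a j) q ≤ 1 := fun j =>
    qPoch_le_one hq0 hq1 (ha j).1 (ha j).2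
  have hak0 : ∀ j : Fin r, 0 ≤ a j * q ^ k := fun j => mul_nonneg (ha j).1 hqk0.le
  have hak1 : ∀ j : Fin r, a j * q ^ k < 1 := fun j => by
    nlinarith [(ha j).1, (ha j).2]
  have hbk0 : ∀ j : Fin s, 0 ≤ b j * q ^ k := fun j => mul_nonneg (hb j).1 hqk0.le
  have hbk1 : ∀ j : Fin s, b j * q ^ k < 1 := fun j => by
    nlinarith [(hb j).1, (hb j).2]
  -- bound for each b-factor
  have hbfac : ∀ j : Fin s, |qPochInf (b j * q ^ k) q - 1| ≤ q ^ k * (1 - q)⁻¹ := by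
    intro j
    have hle := qPoch_le_one hq0 hq1 (hbk0 j) (hbk1 j)
    have hge := qPoch_ge hq0 hq1 (hbk0 j) (hbk1 j)
    rw [abs_sub_comm, abs_of_nonneg (by linarith)]
    have h2 : b j * q ^ k / (1 - q) ≤ q ^ k * (1 - q)⁻¹ := by
      rw [div_eq_mul_inv]
      have : b j * q ^ k ≤ q ^ k := by nlinarith [(hb j).1, (hb j).2]
      exact mul_le_mul_of_nonneg_right this (by positivity)
    linarith
  -- bound for each a-factor
  have hafac : ∀ j : Fin r, |(qPochInf (a j * q ^ k) q)⁻¹ - 1|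
      ≤ q ^ k * ((1 - q) * qPochInf (a j) q)⁻¹ := by
    intro j
    have hle := qPoch_le_one hq0 hq1 (hak0 j) (hak1 j)
    have hge := qPoch_ge hq0 hq1 (hak0 j) (hak1 j)
    have hmono := qPoch_mono hq0 hq1 (ha j).1 (ha j).2 k
    have hA'pos : 0 < qPochInf (a j * q ^ k) q := lt_of_lt_of_le (hA j) hmono
    have hxge1 : 1 ≤ (qPochInf (a j * q ^ k) q)⁻¹ := (one_le_inv₀ hA'pos).mpr hle
    rw [abs_of_nonneg (by linarith)]
    have key : (qPochInf (a j * q ^ k) q)⁻¹ - 1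
        = (1 - qPochInf (a j * q ^ k) q) / qPochInf (a j * q ^ k) q := by
      field_simp
    rw [key]
    have hnum : 1 - qPochInf (a j * q ^ k) q ≤ q ^ k / (1 - q) := by
      have h2 : a j * q ^ k / (1 - q) ≤ q ^ k / (1 - q) := by
        gcongr
        nlinarith [(ha j).1, (ha j).2]
      linarith
    calc (1 - qPochInf (a j * q ^ k) q) / qPochInf (a j * q ^ k) q
        ≤ (q ^ k / (1 - q)) / qPochInf (a j) q :=
          div_le_div₀ (by positivity) hnum (hA j) hmono
      _ = q ^ k * ((1 - q) * qPochInf (a j) q)⁻¹ := by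
          rw [div_div, div_eq_mul_inv]
  set SB : ℝ := ∏ _j : Fin s, (1 + (1 - q)⁻¹) with hSBdef
  set SA : ℝ := ∏ j : Fin r, (1 + ((1 - q) * qPochInf (a j) q)⁻¹) with hSAdef
  have hXb : |(∏ j, qPochInf (b j * q ^ k) q) - 1| ≤ q ^ k * (SB - 1) := by
    calc |(∏ j, qPochInf (b j * q ^ k) q) - 1|
        ≤ ∏ _j : Fin s, (1 + q ^ k * (1 - q)⁻¹) - 1 :=
          abs_prod_sub_one_le Finset.univ _ (fun _ => q ^ k * (1 - q)⁻¹)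
            (fun _ => by positivity) hbfac
      _ ≤ q ^ k * (SB - 1) :=
          prod_one_add_mul_le Finset.univ (fun _ => (1 - q)⁻¹) (q ^ k) hqk0.le hqk1
            (fun _ => by positivity)
  have hYb : |(∏ j, (qPochInf (a j * q ^ k) q)⁻¹) - 1| ≤ q ^ k * (SA - 1) := by
    calc |(∏ j, (qPochInf (a j * q ^ k) q)⁻¹) - 1|
        ≤ ∏ j : Fin r, (1 + q ^ k * ((1 - q) * qPochInf (a j) q)⁻¹) - 1 :=
          abs_prod_sub_one_le Finset.univ _
            (fun j => q ^ k * ((1 - q) * qPochInf (a j) q)⁻¹)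
            (fun j => mul_nonneg hqk0.le (inv_nonneg.2 (mul_nonneg h1q.le (hA j).le))) hafac
      _ ≤ q ^ k * (SA - 1) :=
          prod_one_add_mul_le Finset.univ
            (fun j => ((1 - q) * qPochInf (a j) q)⁻¹) (q ^ k) hqk0.le hqk1
            (fun j => inv_nonneg.2 (mul_nonneg h1q.le (hA j).le))
  have hSB1 : (1:ℝ) ≤ SB := by
    rw [hSBdef]
    calc (1:ℝ) = ∏ _j : Fin s, (1:ℝ) := by simp
      _ ≤ _ := Finset.prod_le_prod (fun _ _ => zero_le_one)
          (fun _ _ => by linarith [inv_nonneg.mpr h1q.le])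
  have hSA1 : (1:ℝ) ≤ SA := by
    rw [hSAdef]
    calc (1:ℝ) = ∏ _j : Fin r, (1:ℝ) := by simp
      _ ≤ _ := Finset.prod_le_prod (fun _ _ => zero_le_one)
          (fun j _ => by
            have h6 : (0:ℝ) ≤ ((1 - q) * qPochInf (a j) q)⁻¹ :=
              inv_nonneg.2 (mul_nonneg h1q.le (hA j).le)
            linarith)
  have hcomb : |(∏ j, qPochInf (b j * q ^ k) q) * (∏ j, (qPochInf (a j * q ^ k) q)⁻¹) - 1|
      ≤ q ^ k * (SB * SA) := by
    set X := ∏ j, qPochInf (b j * q ^ k) q with hX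
    set Y := ∏ j, (qPochInf (a j * q ^ k) q)⁻¹ with hY
    have e1 : |X * Y - 1| ≤ |X| * |Y - 1| + |X - 1| := by
      have heq : X * Y - 1 = X * (Y - 1) + (X - 1) := by ring
      rw [heq]
      calc |X * (Y - 1) + (X - 1)| ≤ |X * (Y - 1)| + |X - 1| := abs_add_le _ _
        _ = |X| * |Y - 1| + |X - 1| := by rw [abs_mul]
    have e2 : |X| ≤ 1 + q ^ k * (SB - 1) := by
      have h3 : |X| ≤ |X - 1| + 1 := by
        calc |X| = |(X - 1) + 1| := by ring_nf
          _ ≤ |X - 1| + |(1:ℝ)| := abs_add_le _ _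
          _ = |X - 1| + 1 := by rw [abs_one]
      linarith [hXb]
    have e3 : |X| * |Y - 1| ≤ (1 + q ^ k * (SB - 1)) * (q ^ k * (SA - 1)) :=
      mul_le_mul e2 hYb (abs_nonneg _) (by nlinarith)
    nlinarith [mul_nonneg (sub_nonneg.2 hSB1) (sub_nonneg.2 hSA1), hqk0, hqk1,
      mul_nonneg hqk0.le (mul_nonneg (sub_nonneg.2 hSB1) (sub_nonneg.2 hSA1))]
  refine hcomb.trans ?_
  -- final comparison with the RHS
  have hprodApos : 0 < ∏ j, qPochInf (a j) q := Finset.prod_pos (fun j _ => hA j)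
  have hBneg : (1:ℝ) ≤ ∏ j, qPochInf (-(b j * q ^ 2)) q := by
    calc (1:ℝ) = ∏ _j : Fin s, (1:ℝ) := by simp
      _ ≤ _ := Finset.prod_le_prod (fun _ _ => zero_le_one)
          (fun j _ => qPoch_neg_ge_one hq0 hq1 (mul_nonneg (hb j).1 (by positivity)))
  have hbase : 1 + (1 - q)⁻¹ ≤ 2 / (1 - q) := by
    rw [le_div_iff₀ h1q]
    have h4 : (1 - q) * (1 - q)⁻¹ = 1 := mul_inv_cancel₀ (ne_of_gt h1q)
    nlinarith
  have hSBle : SB ≤ (2 / (1 - q)) ^ s := by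
    rw [hSBdef, Finset.prod_const, Finset.card_univ, Fintype.card_fin]
    exact pow_le_pow_left₀ (by positivity) hbase s
  have hSAle : SA ≤ (2 / (1 - q)) ^ r * (∏ j, qPochInf (a j) q)⁻¹ := by
    calc SA ≤ ∏ j : Fin r, (2 / (1 - q) * (qPochInf (a j) q)⁻¹) := by
          rw [hSAdef]
          refine Finset.prod_le_prod (fun j _ => ?_) (fun j _ => ?_)
          · have h6 : (0:ℝ) ≤ ((1 - q) * qPochInf (a j) q)⁻¹ :=
              inv_nonneg.2 (mul_nonneg h1q.le (hA j).le)
            linarith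
          have hle1 : (1 - q) * qPochInf (a j) q ≤ 1 := by
            nlinarith [hAle1 j, hA j]
          have hinv1 : 1 ≤ ((1 - q) * qPochInf (a j) q)⁻¹ :=
            (one_le_inv₀ (mul_pos h1q (hA j))).mpr hle1
          have heq2 : 2 / (1 - q) * (qPochInf (a j) q)⁻¹
              = 2 * ((1 - q) * qPochInf (a j) q)⁻¹ := by
            rw [mul_inv, div_eq_mul_inv]; ring
          rw [heq2]
          linarith
      _ = (2 / (1 - q)) ^ r * (∏ j, qPochInf (a j) q)⁻¹ := by
          rw [Finset.prod_mul_distrib, Finset.prod_const, Finset.card_univ,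
            Fintype.card_fin, ← Finset.prod_inv_distrib]
  rw [div_eq_mul_inv, pow_add]
  calc q ^ k * (SB * SA)
      ≤ q ^ k * ((2 / (1 - q)) ^ s * ((2 / (1 - q)) ^ r * (∏ j, qPochInf (a j) q)⁻¹)) := by
        have h5 : SB * SA ≤ (2 / (1 - q)) ^ s * ((2 / (1 - q)) ^ r * (∏ j, qPochInf (a j) q)⁻¹) :=
          mul_le_mul hSBle hSAle (by linarith) (by positivity)
        exact mul_le_mul_of_nonneg_left h5 hqk0.le
    _ = (2 / (1 - q)) ^ r * (2 / (1 - q)) ^ s * 1 * q ^ k * (∏ j, qPochInf (a j) q)⁻¹ := by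
        ring
    _ ≤ (2 / (1 - q)) ^ r * (2 / (1 - q)) ^ s * (∏ j, qPochInf (-(b j * q ^ 2)) q) * q ^ k
          * (∏ j, qPochInf (a j) q)⁻¹ := by
        have h7 : (0:ℝ) ≤ (2 / (1 - q)) ^ r * (2 / (1 - q)) ^ s * q ^ k
            * (∏ j, qPochInf (a j) q)⁻¹ :=
          mul_nonneg (mul_nonneg (mul_nonneg (by positivity) (by positivity)) hqk0.le)
            (inv_nonneg.2 hprodApos.le)
        nlinarith [hBneg, h7]
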